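/- Let v be a B-strict standard episturmian word over B = A \ {x}, where A is a finite alphabet and x ∉ B, and let t = ṽ_p · x · v for some p ≥ 0. Then t is fine over A: for every letter a ∈ A and every total order on A with a minimal, min(t) = a·v. -/

import Mathlib

/-- The prefix of length `k` of an infinite word `w : ℕ → A`. -/
def pref {A : Type*} (w : ℕ → A) (k : ℕ) : List A := (List.range k).map w

/-- `u` is a (finite) factor of the infinite word `w`. -/
def IsFactor {A : Type*} (w : ℕ → A) (u : List A) : Prop :=
  ∃ i : ℕ, u = (List.range u.length).map (fun j => w (i + j))

/-- Prepend a letter to an infinite word. -/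
def consW {A : Type*} (a : A) (s : ℕ → A) : ℕ → A := fun n => match n with
  | 0 => a
  | n + 1 => s n

/-- Concatenation of a finite word with an infinite word. -/
def catW {A : Type*} (u : List A) (w : ℕ → A) : ℕ → A := fun n =>
  if h : n < u.length then u.get ⟨n, h⟩ else w (n - u.length)

/-- `u` is the lexicographically smallest factor of `w` of length `k`,
w.r.t. the strict order `lt` on letters. -/
def IsMinFactor {A : Type*} (lt : A → A → Prop) (w : ℕ → A) (k : ℕ) (u : List A) : Prop :=
  IsFactor w u ∧ u.length = k ∧
    ∀ v, IsFactor w v → v.length = k → u = v ∨ List.Lex lt u v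

/-- `u` is the lexicographically greatest factor of `w` of length `k`. -/
def IsMaxFactor {A : Type*} (lt : A → A → Prop) (w : ℕ → A) (k : ℕ) (u : List A) : Prop :=
  IsFactor w u ∧ u.length = k ∧
    ∀ v, IsFactor w v → v.length = k → u = v ∨ List.Lex lt v u

/-- `m = min(w)`: every length-`k` prefix of `m` is the lexicographically
smallest factor of `w` of length `k`. -/
def IsMinWord {A : Type*} (lt : A → A → Prop) (w m : ℕ → A) : Prop :=
  ∀ k : ℕ, IsMinFactor lt w k (pref m k)

/-- `m = max(w)`. -/
def IsMaxWord {A : Type*} (lt : A → A → Prop) (w m : ℕ → A) : Prop :=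
  ∀ k : ℕ, IsMaxFactor lt w k (pref m k)

/-- The letter `z` is separating for `t`: every length-2 factor of `t` contains `z`. -/
def Separating {A : Type*} (z : A) (t : ℕ → A) : Prop :=
  ∀ u, IsFactor t u → u.length = 2 → z ∈ u

/-- The episturmian morphism `Ψ_z` on finite words: `z ↦ z`, `x ↦ zx` for `x ≠ z`. -/
def psiL {A : Type*} [DecidableEq A] (z : A) (u : List A) : List A :=
  u.flatMap (fun x => if x = z then [z] else [z, x])

/-- `t = Ψ_z(y)` for infinite words: the `Ψ_z`-image of every prefix of `y`
is a prefix of `t`. -/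
def PsiImage {A : Type*} [DecidableEq A] (z : A) (y t : ℕ → A) : Prop :=
  ∀ n : ℕ, psiL z (pref y n) = pref t (psiL z (pref y n)).length

/-- `u` is a left special factor of `w`. -/
def LeftSpecial {A : Type*} (w : ℕ → A) (u : List A) : Prop :=
  ∃ a b : A, a ≠ b ∧ IsFactor w (a :: u) ∧ IsFactor w (b :: u)

/-- `u` is a right special factor of `w`. -/
def RightSpecial {A : Type*} (w : ℕ → A) (u : List A) : Prop :=
  ∃ a b : A, a ≠ b ∧ IsFactor w (u ++ [a]) ∧ IsFactor w (u ++ [b])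

/-- `w` is a standard episturmian word: factors closed under reversal and
every left special factor is a prefix. -/
def StdEpisturmian {A : Type*} (w : ℕ → A) : Prop :=
  (∀ u, IsFactor w u → IsFactor w u.reverse) ∧
  (∀ u, LeftSpecial w u → u = pref w u.length)

/-- `w` is an `A`-strict standard episturmian word (standard Arnoux-Rauzy sequence):
standard episturmian and every prefix has every letter as a left extension. -/
def StrictStdEpisturmian {A : Type*} (w : ℕ → A) : Prop :=
  StdEpisturmian w ∧ ∀ (n : ℕ) (a : A), IsFactor w (a :: pref w n)

/-- `w` is episturmian: factors closed under reversal and at most one right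
special factor of each length. -/
def Episturmian {A : Type*} (w : ℕ → A) : Prop :=
  (∀ u, IsFactor w u → IsFactor w u.reverse) ∧
  (∀ u v, RightSpecial w u → RightSpecial w v → u.length = v.length → u = v)

/-- `w` is an `A`-strict episturmian word: it has the same set of factors as some
`A`-strict standard episturmian word. -/
def StrictEpisturmian {A : Type*} (w : ℕ → A) : Prop :=
  ∃ s : ℕ → A, StrictStdEpisturmian s ∧ ∀ u, IsFactor w u ↔ IsFactor s u

/-- `t` is fine: there is an infinite word `s` such that for every total order on the
alphabet and every letter `a` minimal for that order, `min(t) = a·s`. -/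
def Fine {A : Type*} (t : ℕ → A) : Prop :=
  ∃ s : ℕ → A, ∀ (l : LinearOrder A) (a : A), (∀ b, l.le a b) →
    IsMinWord l.lt t (consW a s)


section Aux

variable {A : Type*}

/-- The segment of `w` starting at `i` of length `k`. -/
def seg (w : ℕ → A) (i k : ℕ) : List A := (List.range k).map (fun j => w (i + j))

@[simp] lemma seg_length (w : ℕ → A) (i k : ℕ) : (seg w i k).length = k := by simp [seg]

lemma isFactor_iff_seg (w : ℕ → A) (u : List A) : IsFactor w u ↔ ∃ i, u = seg w i u.length :=
  Iff.rfl

lemma isFactor_seg (w : ℕ → A) (i k : ℕ) : IsFactor w (seg w i k) :=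
  ⟨i, by rw [seg_length]; rfl⟩

lemma seg_congr {w w' : ℕ → A} {i i' k : ℕ} (h : ∀ j, j < k → w (i + j) = w' (i' + j)) :
    seg w i k = seg w' i' k := by
  unfold seg
  apply List.map_congr_left
  intro j hj
  exact h j (List.mem_range.mp hj)

lemma seg_add (w : ℕ → A) (i m d : ℕ) : seg w i (m + d) = seg w i m ++ seg w (i + m) d := by
  unfold seg
  rw [List.range_add, List.map_append, List.map_map]
  congr 1
  apply List.map_congr_left
  intro j _
  simp only [Function.comp_apply]
  congr 1
  omega

lemma seg_one (w : ℕ → A) (i : ℕ) : seg w i 1 = [w i] := by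
  simp [seg, List.range_succ]

lemma seg_succ (w : ℕ → A) (i d : ℕ) : seg w i (1 + d) = w i :: seg w (i + 1) d := by
  rw [seg_add, seg_one]; rfl

@[simp] lemma getElem_seg (w : ℕ → A) (i k n : ℕ) (h : n < (seg w i k).length) :
    (seg w i k)[n] = w (i + n) := by
  simp [seg]

lemma pref_eq_seg (w : ℕ → A) (k : ℕ) : pref w k = seg w 0 k := by
  unfold pref seg
  apply List.map_congr_left
  intro j _
  simp

@[simp] lemma pref_length (w : ℕ → A) (k : ℕ) : (pref w k).length = k := by simp [pref]

lemma pref_add (w : ℕ → A) (m d : ℕ) : pref w (m + d) = pref w m ++ seg w m d := by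
  rw [pref_eq_seg, pref_eq_seg, seg_add, Nat.zero_add]

lemma pref_succ (w : ℕ → A) (n : ℕ) : pref w (n + 1) = pref w n ++ [w n] := by
  rw [pref_add, seg_one]

lemma isFactor_pref (w : ℕ → A) (k : ℕ) : IsFactor w (pref w k) := by
  rw [pref_eq_seg]; exact isFactor_seg w 0 k

lemma pref_consW (a : A) (v : ℕ → A) (k : ℕ) :
    pref (consW a v) (k + 1) = a :: pref v k := by
  rw [pref_eq_seg, Nat.add_comm, seg_succ]
  congr 1
  rw [pref_eq_seg]
  apply seg_congr
  intro j _
  show consW a v (0 + 1 + j) = v (0 + j)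
  have h1 : 0 + 1 + j = j + 1 := by omega
  have h2 : 0 + j = j := by omega
  rw [h1, h2]
  rfl

lemma isFactor_prefix {w : ℕ → A} {u s : List A} (h : IsFactor w u) (hs : s <+: u) :
    IsFactor w s := by
  obtain ⟨t, rfl⟩ := hs
  obtain ⟨i, he⟩ := h
  have he' : s ++ t = seg w i ((s ++ t).length) := he
  rw [List.length_append, seg_add] at he'
  obtain ⟨h1, _⟩ := List.append_inj he' (seg_length w i s.length).symm
  exact ⟨i, h1⟩

/-- Every right special factor is the reversal of the prefix of its length. -/
lemma rightSpecial_eq {v : ℕ → A} (hstd : StdEpisturmian v) {c : List A} {d e : A}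
    (hde : d ≠ e) (hd : IsFactor v (c ++ [d])) (he : IsFactor v (c ++ [e])) :
    c = (pref v c.length).reverse := by
  have hd' : IsFactor v (d :: c.reverse) := by
    have := hstd.1 _ hd
    simpa using this
  have he' : IsFactor v (e :: c.reverse) := by
    have := hstd.1 _ he
    simpa using this
  have hls : LeftSpecial v c.reverse := ⟨d, e, hde, hd', he'⟩
  have := hstd.2 _ hls
  rw [List.length_reverse] at this
  rw [← this, List.reverse_reverse]

/-- Lifting lexicographic comparison along appends of equal-length prefixes. -/
lemma lex_append {lt : A → A → Prop} :
    ∀ {u₁ w₁ : List A} (u₂ w₂ : List A), u₁.length = w₁.length →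
      List.Lex lt u₁ w₁ → List.Lex lt (u₁ ++ u₂) (w₁ ++ w₂)
  | [], [], _, _, _, h => by cases h
  | [], _ :: _, _, _, hl, _ => by simp at hl
  | _ :: _, [], _, _, hl, _ => by simp at hl
  | a :: u₁, b :: w₁, u₂, w₂, hl, h => by
    cases h with
    | rel hab => exact List.Lex.rel hab
    | cons h' =>
      exact List.Lex.cons (lex_append u₂ w₂ (by simpa using hl) h')

lemma lex_append_cons {lt : A → A → Prop} (c : List A) {d e : A} (s s' : List A)
    (h : lt d e) : List.Lex lt (c ++ d :: s) (c ++ e :: s') := by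
  induction c with
  | nil => exact List.Lex.rel h
  | cons a c ih => exact List.Lex.cons ih

/-- First-difference decomposition of two distinct equal-length lists. -/
lemma first_diff :
    ∀ {u w : List A}, u.length = w.length → u ≠ w →
      ∃ (c : List A) (d e : A) (s s' : List A),
        d ≠ e ∧ u = c ++ d :: s ∧ w = c ++ e :: s'
  | [], [], _, hne => absurd rfl hne
  | [], _ :: _, hl, _ => by simp at hl
  | _ :: _, [], hl, _ => by simp at hl
  | a :: u, b :: w, hl, hne => by
    by_cases hab : a = b
    · subst hab
      have huw : u ≠ w := fun h => hne (by rw [h])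
      obtain ⟨c, d, e, s, s', h1, h2, h3⟩ := first_diff (by simpa using hl) huw
      exact ⟨a :: c, d, e, s, s', h1, by rw [h2]; rfl, by rw [h3]; rfl⟩
    · exact ⟨[], a, b, u, w, hab, rfl, rfl⟩

lemma lt_of_le_ne (l : LinearOrder A) {a b : A} (h : l.le a b) (hne : a ≠ b) : l.lt a b := by
  letI := l
  exact lt_of_le_of_ne h hne

/-- Core lemma: `a · v` is lexicographically minimal among factors of `v`,
for `v` strict standard episturmian and `a` a minimal letter with `a ≠ x`. -/
lemma core_min {x : A} {v : ℕ → A}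
    (hstd : StdEpisturmian v)
    (hstrict : ∀ (n : ℕ) (b : A), b ≠ x → IsFactor v (b :: pref v n))
    (l : LinearOrder A) (a : A) (ha : ∀ b, l.le a b) (hax : a ≠ x)
    (k : ℕ) (w : List A) (hw : IsFactor v w) (hwl : w.length = k + 1) :
    a :: pref v k = w ∨ List.Lex l.lt (a :: pref v k) w := by
  set u : List A := a :: pref v k with hu
  have hul : u.length = k + 1 := by simp [hu]
  by_cases heq : u = w
  · exact Or.inl heq
  right
  obtain ⟨c, d, e, s, s', hde, hcu, hcw⟩ := first_diff (by rw [hul, hwl]) heq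
  cases c with
  | nil =>
    rw [hu, List.nil_append] at hcu
    injection hcu with h1 h2
    rw [hcw, List.nil_append, hu]
    exact List.Lex.rel (lt_of_le_ne l (ha e) (by rw [h1]; exact hde))
  | cons a₀ c' =>
    rw [hu, List.cons_append] at hcu
    injection hcu with h1 h2
    subst h1
    set m : ℕ := c'.length with hm
    have hklen : k = m + (1 + s.length) := by
      have := congrArg List.length h2
      simp at this
      omega
    have hc' : c' = pref v m ∧ d :: s = seg v m (1 + s.length) := by
      have hdc : pref v k = pref v m ++ seg v m (1 + s.length) := by
        rw [hklen, pref_add]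
      have h3 : c' ++ d :: s = pref v m ++ seg v m (1 + s.length) := by
        rw [← h2, ← hdc]
      exact List.append_inj h3 (by simp [hm])
    obtain ⟨hc'e, hds⟩ := hc'
    rw [seg_succ] at hds
    injection hds with hd _
    have hfact_d : IsFactor v ((a :: c') ++ [d]) := by
      have h4 : (a :: c') ++ [d] = a :: pref v (m + 1) := by
        rw [hc'e, hd, pref_succ]
        rfl
      rw [h4]
      exact hstrict (m + 1) a hax
    have hfact_e : IsFactor v ((a :: c') ++ [e]) := by
      apply isFactor_prefix hw
      rw [hcw]
      exact ⟨s', by simp⟩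
    have hrs := rightSpecial_eq hstd hde hfact_d hfact_e
    have hclen : (a :: c').length = m + 1 := by simp [hm]
    rw [hclen, pref_succ, List.reverse_append] at hrs
    have hav : a = v m := by
      simp only [List.reverse_cons, List.reverse_nil, List.nil_append,
        List.singleton_append, List.cons.injEq] at hrs
      exact hrs.1
    have hlt : l.lt d e := by
      rw [hd, ← hav]
      exact lt_of_le_ne l (ha e) (by rw [hav, ← hd]; exact hde)
    rw [hcw, hu, h2]
    exact lex_append_cons (a :: c') s s' hlt

end Aux


section Main

variable {A : Type*}

lemma catW_ge (L : List A) (v : ℕ → A) (n : ℕ) (h : L.length ≤ n) :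
    catW L v n = v (n - L.length) := by
  unfold catW; rw [dif_neg (by omega)]

lemma catW_lt (L : List A) (v : ℕ → A) (n : ℕ) (h : n < L.length) :
    catW L v n = L[n] := by
  unfold catW; rw [dif_pos h]; rfl

@[simp] lemma getElem_pref (v : ℕ → A) (k n : ℕ) (h : n < (pref v k).length) :
    (pref v k)[n] = v n := by simp [pref]

lemma t_right (x : A) (v : ℕ → A) (p j : ℕ) :
    catW ((pref v p).reverse ++ [x]) v (p + 1 + j) = v j := by
  rw [catW_ge _ _ _ (by simp)]
  congr 1
  simp

lemma t_mid (x : A) (v : ℕ → A) (p : ℕ) :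
    catW ((pref v p).reverse ++ [x]) v p = x := by
  rw [catW_lt _ _ _ (by simp)]
  rw [List.getElem_append_right (by simp)]
  simp

lemma t_left (x : A) (v : ℕ → A) (p i : ℕ) (h : i < p) :
    catW ((pref v p).reverse ++ [x]) v i = v (p - 1 - i) := by
  rw [catW_lt _ _ _ (by simp; omega)]
  rw [List.getElem_append_left (by simp; omega)]
  rw [List.getElem_reverse]
  simp

lemma segF1 (x : A) (v : ℕ → A) (p i k : ℕ) :
    seg (catW ((pref v p).reverse ++ [x]) v) (p + 1 + i) k = seg v i k := by
  apply seg_congr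
  intro j _
  rw [show p + 1 + i + j = p + 1 + (i + j) by omega, t_right]

lemma segF2 (x : A) (v : ℕ → A) (p k : ℕ) :
    seg (catW ((pref v p).reverse ++ [x]) v) p (1 + k) = x :: pref v k := by
  rw [seg_succ, t_mid]
  congr 1
  rw [pref_eq_seg v k]
  apply seg_congr
  intro j _
  rw [show (0:ℕ) + j = j by omega]
  exact t_right x v p j

lemma segF3 (x : A) (v : ℕ → A) (p i k : ℕ) (h : i + k ≤ p) :
    seg (catW ((pref v p).reverse ++ [x]) v) i k = (seg v (p - i - k) k).reverse := by
  apply List.ext_getElem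
  · simp
  intro n h1 h2
  rw [getElem_seg, List.getElem_reverse]
  rw [t_left x v p _ (by simp only [seg_length] at h1; omega)]
  rw [getElem_seg]
  congr 1
  simp only [seg_length] at h1 ⊢
  omega

lemma segF4 (x : A) (v : ℕ → A) (p i k' : ℕ) (h : i < p) :
    seg (catW ((pref v p).reverse ++ [x]) v) i ((p - i) + (1 + k')) =
      (pref v (p - i)).reverse ++ (x :: pref v k') := by
  rw [seg_add, segF3 x v p i (p - i) (by omega)]
  rw [show i + (p - i) = p by omega, segF2]
  rw [show p - i - (p - i) = 0 by omega, ← pref_eq_seg]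

lemma factor_lift (x : A) (v : ℕ → A) (p : ℕ) {u : List A} (h : IsFactor v u) :
    IsFactor (catW ((pref v p).reverse ++ [x]) v) u := by
  obtain ⟨i, he⟩ := h
  refine ⟨p + 1 + i, ?_⟩
  show u = seg (catW ((pref v p).reverse ++ [x]) v) (p + 1 + i) u.length
  rw [segF1]
  exact he

end Main

/-- If `v` is a `B`-strict standard episturmian word over `B = A \ {x}` and
`t = ṽ_p · x · v`, then `t` is fine with witness `v`. -/
theorem stmt_13 {A : Type*} [Fintype A] (x : A) (v : ℕ → A) (hvx : ∀ i : ℕ, v i ≠ x)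
    (hstd : StdEpisturmian v)
    (hstrict : ∀ (n : ℕ) (b : A), b ≠ x → IsFactor v (b :: pref v n)) (p : ℕ) :
    ∀ (l : LinearOrder A) (a : A), (∀ b, l.le a b) →
      IsMinWord l.lt (catW ((pref v p).reverse ++ [x]) v) (consW a v) := by
  intro l a ha k
  cases k with
  | zero =>
    refine ⟨⟨0, by simp [pref]⟩, by simp, ?_⟩
    intro w hw hwl
    left
    rw [List.length_eq_zero_iff] at hwl
    rw [hwl]
    simp [pref]
  | succ k' =>
    refine ⟨?_, by simp, ?_⟩
    · -- the candidate is a factor of t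
      rw [pref_consW]
      by_cases hax : a = x
      · rw [hax]
        have h2 := isFactor_seg (catW ((pref v p).reverse ++ [x]) v) p (1 + k')
        rw [segF2] at h2
        exact h2
      · exact factor_lift x v p (hstrict k' a hax)
    · -- minimality
      intro w hw hwl
      obtain ⟨i, hwe0⟩ := hw
      rw [hwl] at hwe0
      have hwe : w = seg (catW ((pref v p).reverse ++ [x]) v) i (k' + 1) := hwe0
      rcases Nat.lt_trichotomy i p with hi | hip | hi
      · -- the factor starts inside the reversed prefix
        by_cases hax : a = x
        · right
          rw [pref_consW, hax, hwe, show k' + 1 = 1 + k' by omega, seg_succ,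
            t_left x v p i hi]
          exact List.Lex.rel (lt_of_le_ne l (hax ▸ ha _) ((hvx _).symm))
        · by_cases hk : i + (k' + 1) ≤ p
          · -- entirely inside the reversed prefix: a reversed factor of v
            have hfac : IsFactor v w := by
              rw [hwe, segF3 x v p i (k' + 1) hk]
              exact hstd.1 _ (isFactor_seg v _ _)
            rw [pref_consW]
            exact core_min hstd hstrict l a ha hax k' w hfac hwl
          · -- straddles the central x
            right
            have hsplit : k' + 1 = (p - i) + (1 + (k' - (p - i))) := by omega
            have hwform : w = (pref v (p - i)).reverse ++ (x :: pref v (k' - (p - i))) := by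
              rw [hwe, hsplit]
              exact segF4 x v p i (k' - (p - i)) hi
            have hrfac : IsFactor v ((pref v (p - i)).reverse) :=
              hstd.1 _ (isFactor_pref v (p - i))
            have hrlen : ((pref v (p - i)).reverse).length = (p - i - 1) + 1 := by
              simp; omega
            have hcore := core_min hstd hstrict l a ha hax (p - i - 1) _ hrfac hrlen
            have hudec : pref (consW a v) (k' + 1) =
                (a :: pref v (p - i - 1)) ++
                  (v (p - i - 1) :: seg v (p - i) (k' - (p - i))) := by
              rw [pref_consW]
              have e1 : pref v k' = pref v (p - i - 1) ++ seg v (p - i - 1) (1 + (k' - (p - i))) := by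
                rw [← pref_add]
                congr 1
                omega
              rw [e1, seg_succ, show p - i - 1 + 1 = p - i by omega]
              rfl
            rw [hudec, hwform]
            rcases hcore with hceq | hclex
            · have hrev : (pref v (p - i)).reverse =
                  v (p - i - 1) :: (pref v (p - i - 1)).reverse := by
                rw [show p - i = (p - i - 1) + 1 by omega, pref_succ, List.reverse_append]
                simp
              have hav : a = v (p - i - 1) := by
                rw [hrev] at hceq
                injection hceq with h1 _
              rw [hceq]
              apply lex_append_cons
              rw [← hav]
              exact lt_of_le_ne l (ha x) hax
            · exact lex_append _ _ (by simp; omega) hclex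
      · -- the factor starts exactly at the central x
        have hwform : w = x :: pref v k' := by
          rw [hwe, hip, show k' + 1 = 1 + k' by omega]
          exact segF2 x v p k'
        by_cases hax : a = x
        · left
          rw [pref_consW, hax, hwform]
        · right
          rw [pref_consW, hwform]
          exact List.Lex.rel (lt_of_le_ne l (ha x) hax)
      · -- the factor starts inside the copy of v
        have hwv2 : w = seg v (i - (p + 1)) (k' + 1) := by
          rw [hwe]
          have h5 := segF1 x v p (i - (p + 1)) (k' + 1)
          rw [show p + 1 + (i - (p + 1)) = i by omega] at h5
          exact h5
        have hfac : IsFactor v w := ⟨i - (p + 1), by rw [hwl]; exact hwv2⟩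
        by_cases hax : a = x
        · right
          rw [pref_consW, hax, hwv2, show k' + 1 = 1 + k' by omega, seg_succ]
          exact List.Lex.rel (lt_of_le_ne l (hax ▸ ha _) ((hvx _).symm))
        · rw [pref_consW]
          exact core_min hstd hstrict l a ha hax k' w hfac hwl
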